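/- Let A > 1 be an integer and ĉ ∈ ℝ. Suppose that the uniform random variable on [A]^N given by α ↦ (2/N) ∑_{j=1}^N log(T^j ᾱ) converges in probability to ĉ, i.e., for every ε > 0, (1/A^N)·#{α ∈ [A]^N : |(2/N) ∑_{j=1}^N log(T^j ᾱ) − ĉ| > ε} → 0 as N → ∞. Then the random variable ℓ_g/ℓ_p on Π_A(N) with the uniform measure also converges in probability to ĉ: for every ε > 0, |{C ∈ Π_A(N) : |ℓ_g(C)/ℓ_p(C) − ĉ| > ε}| / π_A(N) → 0 as N → ∞ along even integers. -/

import Mathlib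

open Filter

namespace Winding

/-- Words of length `n` over the alphabet `{1,…,A}`; the `i`-th letter is `(α i).1 + 1`. -/
abbrev Word (A n : ℕ) : Type := Fin n → Fin A

/-- The `i`-th partial quotient `a_{i+1} ∈ {1,…,A}` of a word. -/
def letter {A n : ℕ} (α : Word A n) (i : Fin n) : ℕ := (α i).1 + 1

/-- `α` has period `d`: `d` is a positive divisor of `n` and `a_i = a_{i+d}` whenever in range. -/
def HasPeriod {A n : ℕ} (α : Word A n) (d : ℕ) : Prop :=
  0 < d ∧ d ∣ n ∧
    ∀ (i : ℕ) (h : i + d < n),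
      α ⟨i, Nat.lt_of_le_of_lt (Nat.le_add_right i d) h⟩ = α ⟨i + d, h⟩

/-- The minimal period of a word. -/
noncomputable def mp {A n : ℕ} (α : Word A n) : ℕ := sInf {d | HasPeriod α d}

/-- A word of even length `n` is primitive if `mp α = n`, or `n/2` is odd and `mp α = n/2`. -/
def Primitive {A n : ℕ} (α : Word A n) : Prop :=
  mp α = n ∨ (Odd (n / 2) ∧ mp α = n / 2)

/-- Cyclic shift of a word by `s` positions. -/
def shift {A n : ℕ} (s : ℕ) (α : Word A n) : Word A n :=
  fun i => α ⟨(i.1 + s) % n, Nat.mod_lt _ i.pos⟩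

/-- Even cyclic shift relation. -/
def ShiftRel (A n : ℕ) (α β : Word A n) : Prop :=
  ∃ s : ℕ, Even s ∧ β = shift s α

/-- Primitive words of length `n`. -/
def PrimWord (A n : ℕ) : Type := {α : Word A n // Primitive α}

instance {A n : ℕ} : Finite (PrimWord A n) := by unfold PrimWord; infer_instance

/-- `P_n`: equivalence classes of primitive words of length `n` under even cyclic shifts. -/
def GeodClass (A n : ℕ) : Type :=
  Quot (fun α β : PrimWord A n => ShiftRel A n α.1 β.1)

instance {A n : ℕ} : Finite (GeodClass A n) :=
  Finite.of_surjective _ (Quot.mk_surjective)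

instance (N : ℕ) : Finite {n : ℕ // n ≤ N ∧ Even n} :=
  Finite.of_injective (fun x => (⟨x.1, Nat.lt_succ_of_le x.2.1⟩ : Fin (N + 1)))
    fun x y h => Subtype.ext (by simpa using congrArg Fin.val h)

/-- `Π_A(N)`: the disjoint union of the `P_n` over even `n ≤ N`. -/
def Geod (A N : ℕ) : Type := Σ n : {n : ℕ // n ≤ N ∧ Even n}, GeodClass A n.1

instance {A N : ℕ} : Finite (Geod A N) := by unfold Geod; infer_instance

/-- `π_A(N) = |Π_A(N)|`. -/
noncomputable def piA (A N : ℕ) : ℕ := Nat.card (Geod A N)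

/-- The winding number `Ψ(α) = a_1 - a_2 + a_3 - ⋯ - a_n`. -/
def winding {A n : ℕ} (α : Word A n) : ℤ :=
  ∑ i : Fin n, (-1) ^ (i : ℕ) * (letter α i : ℤ)

/-- Winding number of a closed geodesic (well defined on classes since `Ψ` is invariant
under even cyclic shifts; here computed on a choice of representative). -/
noncomputable def windingG {A N : ℕ} (C : Geod A N) : ℤ := winding C.2.out.1

/-- Period length `ℓ_p` of a closed geodesic. -/
def plenG {A N : ℕ} (C : Geod A N) : ℕ := C.1.1

/-- Word length `ℓ_w(α) = 2 ∑ a_i`. -/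
def wlen {A n : ℕ} (α : Word A n) : ℕ := 2 * ∑ i : Fin n, letter α i

/-- Word length of a closed geodesic. -/
noncomputable def wlenG {A N : ℕ} (C : Geod A N) : ℕ := wlen C.2.out.1

/-- Value of a finite continued fraction `b_1 + 1/(b_2 + 1/(⋯ + 1/b_k))`. -/
noncomputable def cfVal : List ℕ → ℝ
  | [] => 0
  | b :: l => b + 1 / cfVal l

/-- The block `l` repeated `m` times. -/
def repBlock (l : List ℕ) : ℕ → List ℕ
  | 0 => []
  | m + 1 => l ++ repBlock l m

/-- Value of the purely periodic continued fraction with repeating block `l`: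
the limit of the values of the finite continued fractions obtained by repeating `l`. -/
noncomputable def periodicVal (l : List ℕ) : ℝ :=
  limUnder atTop fun m => cfVal (repBlock l m)

/-- The list of partial quotients of a word. -/
def toList {A n : ℕ} (α : Word A n) : List ℕ := List.ofFn (letter α)

/-- `T^j ᾱ`: the purely periodic continued fraction whose repeating block is the
cyclic shift of `α` by `j`. -/
noncomputable def Tpow {A n : ℕ} (α : Word A n) (j : ℕ) : ℝ :=
  periodicVal (toList (shift j α))

/-- Geometric length `ℓ_g(α) = 2 ∑_{j=1}^n log (T^j ᾱ)`. -/
noncomputable def glen {A n : ℕ} (α : Word A n) : ℝ :=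
  2 * ∑ j : Fin n, Real.log (Tpow α (j.1 + 1))

/-- Geometric length of a closed geodesic. -/
noncomputable def glenG {A N : ℕ} (C : Geod A N) : ℝ := glen C.2.out.1


section ShiftLemmas

variable {A n : ℕ}

lemma shift_apply (s : ℕ) (α : Word A n) (i : Fin n) :
    shift s α i = α ⟨(i.1 + s) % n, Nat.mod_lt _ i.pos⟩ := rfl

lemma shift_shift (s t : ℕ) (α : Word A n) : shift s (shift t α) = shift (s + t) α := by
  funext i
  show α ⟨((i.1 + s) % n + t) % n, _⟩ = α ⟨(i.1 + (s + t)) % n, _⟩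
  congr 1
  apply Fin.ext
  show ((i.1 + s) % n + t) % n = (i.1 + (s + t)) % n
  rw [Nat.mod_add_mod]; ring_nf

lemma shift_mod (s : ℕ) (α : Word A n) : shift s α = shift (s % n) α := by
  funext i
  show α ⟨(i.1 + s) % n, _⟩ = α ⟨(i.1 + s % n) % n, _⟩
  congr 1
  apply Fin.ext
  show (i.1 + s) % n = (i.1 + s % n) % n
  conv_lhs => rw [Nat.add_mod]
  conv_rhs => rw [Nat.add_mod, Nat.mod_mod_of_dvd s (dvd_refl n)]

lemma shift_zero (α : Word A n) : shift 0 α = α := by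
  funext i
  show α ⟨(i.1 + 0) % n, _⟩ = α i
  congr 1
  apply Fin.ext
  show (i.1 + 0) % n = i.1
  simp [Nat.mod_eq_of_lt i.2]

lemma shift_dvd {s : ℕ} (h : n ∣ s) (α : Word A n) : shift s α = α := by
  rw [shift_mod, Nat.mod_eq_zero_of_dvd h, shift_zero]

end ShiftLemmas
section GlenLemmas

variable {A n : ℕ}

lemma add_mod_mod' (a s : ℕ) : (a + s) % n = (a + s % n) % n := by
  conv_lhs => rw [Nat.add_mod]
  conv_rhs => rw [Nat.add_mod, Nat.mod_mod_of_dvd s (dvd_refl n)]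

lemma Tpow_congr {j j' : ℕ} (α : Word A n) (h : j % n = j' % n) : Tpow α j = Tpow α j' := by
  unfold Tpow
  rw [shift_mod j, h, ← shift_mod]

lemma Tpow_shift (s j : ℕ) (α : Word A n) : Tpow (shift s α) j = Tpow α (j + s) := by
  unfold Tpow
  rw [shift_shift]

lemma glen_shift (s : ℕ) (α : Word A n) : glen (shift s α) = glen α := by
  rcases Nat.eq_zero_or_pos n with hn | hn
  · subst hn
    have : shift s α = α := funext fun i => i.elim0
    rw [this]
  · haveI : NeZero n := ⟨hn.ne'⟩
    unfold glen
    congr 1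
    set cc : Fin n := ⟨s % n, Nat.mod_lt _ hn⟩ with hcc
    refine Fintype.sum_equiv (Equiv.addRight cc)
      (fun j => Real.log (Tpow (shift s α) (j.1 + 1)))
      (fun j => Real.log (Tpow α (j.1 + 1))) (fun j => ?_)
    show Real.log (Tpow (shift s α) (j.1 + 1)) = Real.log (Tpow α ((Equiv.addRight cc j).1 + 1))
    rw [Tpow_shift]
    congr 1
    apply Tpow_congr
    show (j.1 + 1 + s) % n = ((Equiv.addRight cc j).1 + 1) % n
    have hval : (Equiv.addRight cc j).1 = (j.1 + s % n) % n := by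
      show (j + cc).1 = _
      rw [Fin.add_def]
    rw [hval, Nat.mod_add_mod]
    rw [show j.1 + s % n + 1 = j.1 + 1 + s % n by ring]
    exact add_mod_mod' (j.1 + 1) s

end GlenLemmas

section PeriodLemmas

variable {A n : ℕ} {α : Word A n}

lemma hasPeriod_self (hn : 0 < n) (α : Word A n) : HasPeriod α n :=
  ⟨hn, dvd_rfl, fun i h => absurd h (by omega)⟩

lemma mp_hasPeriod (hn : 0 < n) (α : Word A n) : HasPeriod α (mp α) :=
by
  have h : sInf {d | HasPeriod α d} ∈ {d | HasPeriod α d} :=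
    Nat.sInf_mem ⟨n, by exact hasPeriod_self hn α⟩
  exact h

lemma mp_le {d : ℕ} (h : HasPeriod α d) : mp α ≤ d := Nat.sInf_le h

lemma period_mod {d : ℕ} (h : HasPeriod α d) :
    ∀ i (hi : i < n), α ⟨i, hi⟩ = α ⟨i % d, Nat.lt_of_le_of_lt (Nat.mod_le _ _) hi⟩ := by
  intro i
  induction i using Nat.strong_induction_on with
  | _ i ih =>
    intro hi
    have hd0 : 0 < d := h.1
    rcases lt_or_ge i d with hid | hid
    · congr 1
      exact Fin.ext (Nat.mod_eq_of_lt hid).symm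
    · have h1 : (i - d) + d < n := by omega
      have e1 : (⟨i - d + d, h1⟩ : Fin n) = ⟨i, hi⟩ := Fin.ext (show i - d + d = i by omega)
      rw [← e1, ← h.2.2 (i - d) h1]
      rw [ih (i - d) (by omega) (by omega)]
      congr 1
      exact Fin.ext (Nat.mod_eq_sub_mod hid).symm

lemma shift_eq_self_mul {s : ℕ} (hsh : shift s α = α) (m : ℕ) : shift (m * s) α = α := by
  induction m with
  | zero => simpa using shift_zero α
  | succ m ih =>
    have e : shift ((m + 1) * s) α = shift (m * s) (shift s α) := by
      rw [shift_shift]; congr 1; ring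
    rw [e, hsh, ih]

lemma hasPeriod_gcd (hn : 0 < n) {s : ℕ} (hns : ¬ n ∣ s) (hsh : shift s α = α) :
    HasPeriod α (Nat.gcd n s) := by
  set g := Nat.gcd n s with hg
  have hg0 : 0 < g := Nat.gcd_pos_of_pos_left s hn
  have hgn : g ∣ n := Nat.gcd_dvd_left n s
  have hgs : g ∣ s := Nat.gcd_dvd_right n s
  obtain ⟨n', hn'⟩ := hgn
  obtain ⟨s', hs'⟩ := hgs
  have hcop : Nat.Coprime (n / g) (s / g) := Nat.coprime_div_gcd_div_gcd hg0
  have hn'g : n / g = n' := by rw [hn']; exact Nat.mul_div_cancel_left _ hg0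
  have hs'g : s / g = s' := by rw [hs']; exact Nat.mul_div_cancel_left _ hg0
  rw [hn'g, hs'g] at hcop
  have h2 : 1 < n' := by
    by_contra h'
    push_neg at h'
    interval_cases n'
    · simp at hn'; omega
    · exact hns ⟨s', by rw [show n = g by simpa using hn']; exact hs'⟩
  obtain ⟨m, -, hm⟩ := Nat.exists_mul_mod_eq_one_of_coprime hcop.symm h2
  have hsm : (s * m) % n = g := by
    rw [hs', hn', mul_assoc, Nat.mul_mod_mul_left, hm, mul_one]
  have hshg : shift g α = α := by
    rw [← hsm, ← shift_mod, mul_comm s m]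
    exact shift_eq_self_mul hsh m
  refine ⟨hg0, ⟨n', hn'⟩, fun i hi => ?_⟩
  have hcf := congrFun hshg ⟨i, Nat.lt_of_le_of_lt (Nat.le_add_right i g) hi⟩
  have : α ⟨(i + g) % n, _⟩ = α ⟨i, Nat.lt_of_le_of_lt (Nat.le_add_right i g) hi⟩ := hcf
  refine this.symm.trans ?_
  congr 1
  exact Fin.ext (Nat.mod_eq_of_lt hi)

end PeriodLemmas
section EquivLemmas

variable {A n : ℕ}

lemma even_mod {s : ℕ} (hn : Even n) (hs : Even s) : Even (s % n) := by
  obtain ⟨a, ha⟩ := hn; obtain ⟨b, hb⟩ := hs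
  refine ⟨b % a, ?_⟩
  have : s % n = 2 * (b % a) := by
    rw [show n = 2 * a by omega, show s = 2 * b by omega, Nat.mul_mod_mul_left]
  omega

lemma shiftRel_equivalence (hn : Even n) : Equivalence (ShiftRel A n) := by
  constructor
  · exact fun α => ⟨0, Even.zero, (shift_zero α).symm⟩
  · rintro α β ⟨s, hs, rfl⟩
    rcases Nat.eq_zero_or_pos n with h0 | h0
    · exact ⟨0, Even.zero, by subst h0; exact (funext fun i => i.elim0)⟩
    · have h2 : s % n < n := Nat.mod_lt _ h0
      refine ⟨2 * n - s % n, ?_, ?_⟩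
      · obtain ⟨u, hu⟩ := even_mod hn hs
        exact ⟨n - u, by omega⟩
      · show α = shift (2 * n - s % n) (shift s α)
        rw [shift_shift]
        have h1 := Nat.div_add_mod s n
        have h3 : n * (2 + s / n) = 2 * n + n * (s / n) := by ring
        have hd : n ∣ (2 * n - s % n + s) := ⟨2 + s / n, by omega⟩
        exact (shift_dvd hd α).symm
  · rintro α β γ ⟨s, hs, rfl⟩ ⟨t, ht, rfl⟩
    exact ⟨t + s, ht.add hs, (shift_shift t s α)⟩

lemma primRel_equivalence (hn : Even n) :
    Equivalence (fun α β : PrimWord A n => ShiftRel A n α.1 β.1) := by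
  have h := shiftRel_equivalence (A := A) hn
  exact ⟨fun a => h.refl a.1, fun hab => h.symm hab, fun hab hbc => h.trans hab hbc⟩

lemma shift_inj_of_primitive (hn2 : Even n) (hn : 0 < n) {w : Word A n} (hw : Primitive w)
    {i i' : ℕ} (hi : 2 * i < n) (hi' : 2 * i' < n)
    (heq : shift (2 * i) w = shift (2 * i') w) : i = i' := by
  by_contra hne
  set s0 := 2 * n - 2 * i' + 2 * i with hs0
  have hself : shift s0 w = w := by
    have h1 : shift (2 * n - 2 * i') (shift (2 * i) w) = shift s0 w := by
      rw [shift_shift]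
    have h2 : shift (2 * n - 2 * i') (shift (2 * i') w) = w := by
      rw [shift_shift]
      exact shift_dvd ⟨2, by omega⟩ w
    rw [← h1, heq, h2]
  have hgt : n < s0 := by omega
  have hlt : s0 < 3 * n := by omega
  have hnd : ¬ n ∣ s0 := by
    rintro ⟨cc, hcc⟩
    have h1c : 1 < cc := by
      by_contra h'
      push_neg at h'
      interval_cases cc <;> simp at hcc <;> omega
    have h3c : cc < 3 := by
      by_contra h'
      push_neg at h'
      have : n * 3 ≤ n * cc := Nat.mul_le_mul_left n h'
      omega
    have : cc = 2 := by omega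
    subst this
    have : s0 = 2 * n := by omega
    omega
  have hper := hasPeriod_gcd hn hnd hself
  set g := Nat.gcd n s0 with hgdef
  have hg2 : 2 ∣ g := Nat.dvd_gcd hn2.two_dvd ⟨n - i' + i, by omega⟩
  have hgdn : g ∣ n := Nat.gcd_dvd_left _ _
  have hgn : g ≠ n := fun h => hnd (h ▸ Nat.gcd_dvd_right n s0)
  have hglt : g < n := lt_of_le_of_ne (Nat.le_of_dvd hn hgdn) hgn
  have hmple : mp w ≤ g := mp_le hper
  rcases hw with hmp | ⟨hodd, hmp⟩
  · omega
  · have hg0 : 0 < g := hper.1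
    obtain ⟨cc, hcc⟩ := hgdn
    have hc2 : 2 ≤ cc := by
      by_contra h'
      push_neg at h'
      interval_cases cc <;> simp at hcc <;> omega
    have hghalf : g ≠ n / 2 := by
      intro hgh
      have heg : Even (n / 2) := hgh ▸ (even_iff_two_dvd.mpr hg2)
      exact (Nat.not_even_iff_odd.mpr hodd) heg
    have h2g : 2 * g < n := by
      rcases Nat.lt_or_ge cc 3 with h3 | h3
      · interval_cases cc
        exact absurd (by omega) hghalf
      · have : g * 3 ≤ g * cc := Nat.mul_le_mul_left g h3
        omega
    omega

lemma mp_le_half {w : Word A n} (hn : 0 < n) (hnp : ¬ Primitive w) : 2 * mp w ≤ n := by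
  have hper := mp_hasPeriod hn w
  obtain ⟨cc, hcc⟩ := hper.2.1
  have hne : mp w ≠ n := fun h => hnp (Or.inl h)
  have h0 : 0 < mp w := hper.1
  have hc2 : 2 ≤ cc := by
    by_contra h'
    push_neg at h'
    interval_cases cc <;> simp at hcc <;> omega
  have : mp w * 2 ≤ mp w * cc := Nat.mul_le_mul_left _ hc2
  omega

lemma primWord_zero_empty : IsEmpty (PrimWord A 0) := by
  constructor
  rintro ⟨w, hw⟩
  have h1 : (1 : ℕ) ∈ {d | HasPeriod w d} := by
    exact ⟨one_pos, ⟨0, rfl⟩, fun i h => absurd h (by omega)⟩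
  have hle : mp w ≤ 1 := Nat.sInf_le h1
  have hne : mp w ≠ 0 := by
    intro h0
    rcases Nat.sInf_eq_zero.mp h0 with hmem | hempty
    · exact absurd hmem.1 (lt_irrefl 0)
    · exact absurd h1 (by simp [hempty])
  rcases hw with hmp | ⟨hodd, hmp⟩
  · omega
  · simp at hodd

lemma geodClass_zero_empty : IsEmpty (GeodClass A 0) := by
  constructor
  intro q
  induction q using Quot.ind with
  | _ a => exact (primWord_zero_empty.false a).elim

end EquivLemmas
section Counting

/-- Bad words of length `n`. -/
abbrev BadW (A n : ℕ) (ε cbar : ℝ) : Type :=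
  {α : Word A n // ε < |2 / (n : ℝ) * ∑ j : Fin n, Real.log (Tpow α (j.1 + 1)) - cbar|}

/-- Bad geodesic classes of length `n`. -/
abbrev BadC (A n : ℕ) (ε cbar : ℝ) : Type :=
  {q : GeodClass A n // ε < |glen q.out.1 / (n : ℝ) - cbar|}

lemma count_badC (A n : ℕ) (ε cbar : ℝ) (he : Even n) (hn : 0 < n) :
    Nat.card (BadC A n ε cbar) * (n / 2) ≤ Nat.card (BadW A n ε cbar) := by
  classical
  set f : BadC A n ε cbar × Fin (n / 2) → BadW A n ε cbar := fun p =>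
    ⟨shift (2 * p.2.1) p.1.1.out.1, by
      have hw := p.1.2
      have hkey : 2 / (n : ℝ) * ∑ j : Fin n,
            Real.log (Tpow (shift (2 * p.2.1) p.1.1.out.1) (j.1 + 1))
          = glen p.1.1.out.1 / (n : ℝ) := by
        have h1 : glen (shift (2 * p.2.1) p.1.1.out.1)
            = 2 * ∑ j : Fin n,
                Real.log (Tpow (shift (2 * p.2.1) p.1.1.out.1) (j.1 + 1)) := rfl
        rw [← glen_shift (2 * p.2.1) p.1.1.out.1, h1]
        ring
      rw [hkey]
      exact hw⟩ with hf
  have hinj : Function.Injective f := by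
    intro p p' hpp
    have heq : shift (2 * p.2.1) p.1.1.out.1 = shift (2 * p'.2.1) p'.1.1.out.1 :=
      congrArg Subtype.val hpp
    have hev2 : n / 2 + n / 2 = n := by obtain ⟨a, ha⟩ := he; omega
    have h2i : 2 * p.2.1 < n := by have := p.2.2; omega
    have h2i' : 2 * p'.2.1 < n := by have := p'.2.2; omega
    have hrel : ShiftRel A n p.1.1.out.1 p'.1.1.out.1 := by
      refine ⟨2 * n - 2 * p'.2.1 + 2 * p.2.1, ⟨n - p'.2.1 + p.2.1, by omega⟩, ?_⟩
      have e1 : shift (2 * n - 2 * p'.2.1) (shift (2 * p.2.1) p.1.1.out.1)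
          = shift (2 * n - 2 * p'.2.1 + 2 * p.2.1) p.1.1.out.1 := shift_shift _ _ _
      have e2 : shift (2 * n - 2 * p'.2.1) (shift (2 * p'.2.1) p'.1.1.out.1)
          = p'.1.1.out.1 := by
        rw [shift_shift]
        exact shift_dvd ⟨2, by omega⟩ _
      rw [← e1, heq]
      exact e2.symm
    have hqq : p.1.1 = p'.1.1 := by
      have hs : Quot.mk (fun a b : PrimWord A n => ShiftRel A n a.1 b.1) p.1.1.out
          = Quot.mk _ p'.1.1.out := Quot.sound hrel
      exact (Quot.out_eq _).symm.trans (hs.trans (Quot.out_eq _))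
    have heq' : shift (2 * p.2.1) p'.1.1.out.1 = shift (2 * p'.2.1) p'.1.1.out.1 := by
      rw [hqq] at heq; exact heq
    have hii : p.2.1 = p'.2.1 :=
      shift_inj_of_primitive he hn p'.1.1.out.2 h2i h2i' heq'
    exact Prod.ext (Subtype.ext hqq) (Fin.ext hii)
  have hle := Nat.card_le_card_of_injective f hinj
  rw [Nat.card_prod, Nat.card_eq_fintype_card (α := Fin (n / 2)), Fintype.card_fin] at hle
  exact hle

lemma prim_le_classes (A k : ℕ) (hk : 0 < k) :
    Nat.card (PrimWord A (2 * k)) ≤ Nat.card (GeodClass A (2 * k)) * k := by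
  classical
  have heb : Even (2 * k) := even_two_mul k
  have hequiv := primRel_equivalence (A := A) (n := 2 * k) heb
  have hex : ∀ w : PrimWord A (2 * k), ∃ j : Fin k,
      shift (2 * j.1) ((Quot.mk _ w : GeodClass A (2 * k)).out).1 = w.1 := by
    intro w
    have h1 : Quot.mk (fun a b : PrimWord A (2 * k) => ShiftRel A (2 * k) a.1 b.1)
        ((Quot.mk _ w : GeodClass A (2 * k)).out) = Quot.mk _ w := Quot.out_eq _
    have h2 : ShiftRel A (2 * k) ((Quot.mk _ w : GeodClass A (2 * k)).out).1 w.1 :=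
      (hequiv.eqvGen_iff).mp (Quot.eq.mp h1)
    obtain ⟨s, hs, hsh⟩ := h2
    have hsm : Even (s % (2 * k)) := even_mod heb hs
    obtain ⟨u, hu⟩ := hsm
    have hun : u < k := by
      have := Nat.mod_lt s (show 0 < 2 * k by omega)
      omega
    refine ⟨⟨u, hun⟩, ?_⟩
    rw [show 2 * u = s % (2 * k) by omega, ← shift_mod]
    exact hsh.symm
  choose jf hjf using hex
  have hinj : Function.Injective
      (fun w : PrimWord A (2 * k) => ((Quot.mk _ w : GeodClass A (2 * k)), jf w)) := by
    intro w w' hww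
    have h1 : (Quot.mk _ w : GeodClass A (2 * k)) = Quot.mk _ w' := congrArg Prod.fst hww
    have h2 : jf w = jf w' := congrArg Prod.snd hww
    apply Subtype.ext
    rw [← hjf w, ← hjf w', h2, h1]
  have hle := Nat.card_le_card_of_injective _ hinj
  rw [Nat.card_prod, Nat.card_eq_fintype_card (α := Fin k), Fintype.card_fin] at hle
  exact hle

lemma word_card_split (A m : ℕ) :
    Nat.card (Word A m) ≤ Nat.card (PrimWord A m) + Nat.card {w : Word A m // ¬ Primitive w} := by
  classical
  have e : ({w : Word A m // Primitive w} ⊕ {w : Word A m // ¬ Primitive w}) ≃ Word A m :=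
    Equiv.sumCompl _
  have hc := Nat.card_congr e.symm
  rw [hc, Nat.card_sum]
  exact le_rfl

lemma card_word (A n : ℕ) : Nat.card (Word A n) = A ^ n := by
  simp [Nat.card_eq_fintype_card]

lemma nonprim_card_le (A k : ℕ) (hk : 0 < k) :
    Nat.card {w : Word A (2 * k) // ¬ Primitive w}
      ≤ Nat.card (Σ d : Fin (k + 1), Word A d.1) := by
  classical
  have hn : 0 < 2 * k := by omega
  set F : {w : Word A (2 * k) // ¬ Primitive w} → Σ d : Fin (k + 1), Word A d.1 := fun w =>
    ⟨⟨mp w.1, by have := mp_le_half hn w.2; omega⟩,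
      fun j => w.1 ⟨j.1, by
        have h1 : mp w.1 ≤ 2 * k := by have := mp_le_half hn w.2; omega
        exact lt_of_lt_of_le j.2 h1⟩⟩ with hF
  have hinj : Function.Injective F := by
    intro w w' hww
    have hd : mp w.1 = mp w'.1 := by
      have := congrArg (fun x => x.1.1) hww
      simpa [hF] using this
    set G : (Σ d : Fin (k + 1), Word A d.1) → ℕ → ℕ := fun x i =>
      if h : i < x.1.1 then (x.2 ⟨i, h⟩).1 else 0 with hG
    have hGw := congrArg G hww
    apply Subtype.ext
    funext i
    have hper := mp_hasPeriod hn w.1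
    have hper' := mp_hasPeriod hn w'.1
    have hmp0 : 0 < mp w.1 := hper.1
    have e1 := period_mod hper i.1 i.2
    have e2 := period_mod hper' i.1 i.2
    have hm : i.1 % mp w.1 < mp w.1 := Nat.mod_lt _ hmp0
    have hv : (w.1 ⟨i.1 % mp w.1, Nat.lt_of_le_of_lt (Nat.mod_le _ _) i.2⟩).1
        = (w'.1 ⟨i.1 % mp w.1, Nat.lt_of_le_of_lt (Nat.mod_le _ _) i.2⟩).1 := by
      have := congrFun hGw (i.1 % mp w.1)
      rw [hG] at this
      simp only [hF] at this
      rw [dif_pos hm, dif_pos (hd ▸ hm)] at this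
      exact this
    have hveq : w.1 ⟨i.1 % mp w.1, Nat.lt_of_le_of_lt (Nat.mod_le _ _) i.2⟩
        = w'.1 ⟨i.1 % mp w.1, Nat.lt_of_le_of_lt (Nat.mod_le _ _) i.2⟩ := Fin.ext hv
    have hi' : w'.1 ⟨i.1, i.2⟩
        = w'.1 ⟨i.1 % mp w.1, Nat.lt_of_le_of_lt (Nat.mod_le _ _) i.2⟩ := by
      rw [e2]
      congr 1
      exact Fin.ext (by rw [hd])
    show w.1 ⟨i.1, i.2⟩ = w'.1 ⟨i.1, i.2⟩
    rw [e1, hveq, ← hi']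
  exact Nat.card_le_card_of_injective F hinj

lemma nat_card_sigma_words (A m : ℕ) :
    Nat.card (Σ d : Fin (m + 1), Word A d.1) = ∑ d ∈ Finset.range (m + 1), A ^ d := by
  classical
  rw [Nat.card_eq_fintype_card, Fintype.card_sigma, ← Fin.sum_univ_eq_sum_range]
  congr 1
  funext d
  simp

lemma geom_le {A : ℕ} (hA : 2 ≤ A) : ∀ m, ∑ d ∈ Finset.range m, A ^ d ≤ A ^ m
  | 0 => by simp
  | m + 1 => by
    rw [Finset.sum_range_succ, pow_succ]
    have h1 := geom_le hA m
    have h2 : 0 < A ^ m := pow_pos (by omega) m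
    nlinarith

lemma nat_card_sigma {m : ℕ} (T : Fin m → Type*) [∀ i, Finite (T i)] :
    Nat.card (Σ i, T i) = ∑ i, Nat.card (T i) := by
  haveI : ∀ i, Fintype (T i) := fun i => Fintype.ofFinite _
  simp [Nat.card_eq_fintype_card, Fintype.card_sigma]

end Counting
section Assembly

/-- Bad classes with parity information. -/
abbrev BadCE (A n : ℕ) (ε cbar : ℝ) : Type :=
  {q : GeodClass A n // Even n ∧ 0 < n ∧ ε < |glen q.out.1 / (n : ℝ) - cbar|}

lemma badCE_le_badC (A n : ℕ) (ε cbar : ℝ) :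
    Nat.card (BadCE A n ε cbar) ≤ Nat.card (BadC A n ε cbar) := by
  apply Nat.card_le_card_of_injective (fun x => ⟨x.1, x.2.2.2⟩)
  intro x y hxy
  exact Subtype.ext (congrArg (fun z : BadC A n ε cbar => z.1) hxy)

lemma badCE_zero {A n : ℕ} {ε cbar : ℝ} (hnot : ¬ (Even n ∧ 0 < n)) :
    Nat.card (BadCE A n ε cbar) = 0 := by
  haveI : IsEmpty (BadCE A n ε cbar) := ⟨fun x => hnot ⟨x.2.1, x.2.2.1⟩⟩
  exact Nat.card_of_isEmpty

lemma badCE_mul_le {A n : ℕ} {ε cbar : ℝ} (he : Even n) (hn : 0 < n) :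
    Nat.card (BadCE A n ε cbar) * n ≤ 2 * Nat.card (BadW A n ε cbar) := by
  have h1 : Nat.card (BadCE A n ε cbar) ≤ Nat.card (BadC A n ε cbar) := badCE_le_badC A n ε cbar
  have h2 := count_badC A n ε cbar he hn
  have hn2 : n / 2 * 2 = n := by obtain ⟨a, ha⟩ := he; omega
  calc Nat.card (BadCE A n ε cbar) * n
      = Nat.card (BadCE A n ε cbar) * (n / 2) * 2 := by rw [mul_assoc, hn2]
    _ ≤ Nat.card (BadC A n ε cbar) * (n / 2) * 2 :=
        Nat.mul_le_mul_right _ (Nat.mul_le_mul_right _ h1)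
    _ ≤ Nat.card (BadW A n ε cbar) * 2 := Nat.mul_le_mul_right _ h2
    _ = 2 * Nat.card (BadW A n ε cbar) := mul_comm _ _

lemma badW_le_pow (A n : ℕ) (ε cbar : ℝ) : Nat.card (BadW A n ε cbar) ≤ A ^ n := by
  rw [← card_word A n]
  exact Nat.card_le_card_of_injective Subtype.val Subtype.coe_injective

lemma badGeod_le (A N : ℕ) (ε cbar : ℝ) :
    Nat.card {C : Geod A N // ε < |glenG C / (plenG C : ℝ) - cbar|}
      ≤ ∑ n ∈ Finset.range (N + 1), Nat.card (BadCE A n ε cbar) := by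
  classical
  have hF : ∀ C : {C : Geod A N // ε < |glenG C / (plenG C : ℝ) - cbar|}, 0 < C.1.1.1 := by
    intro C
    rcases Nat.eq_zero_or_pos C.1.1.1 with h0 | h
    · exact ((geodClass_zero_empty (A := A)).false (cast (congrArg (GeodClass A) h0) C.1.2)).elim
    · exact h
  set F : {C : Geod A N // ε < |glenG C / (plenG C : ℝ) - cbar|}
      → Σ n : Fin (N + 1), BadCE A n.1 ε cbar := fun C =>
    ⟨⟨C.1.1.1, by have := C.1.1.2.1; omega⟩, ⟨C.1.2, C.1.1.2.2, hF C, C.2⟩⟩ with hFdef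
  have hinj : Function.Injective F := by
    intro C C' hCC
    have h1 : C.1.1.1 = C'.1.1.1 := by
      have := congrArg (fun x => x.1.1) hCC
      simpa [hFdef] using this
    apply Subtype.ext
    obtain ⟨⟨⟨n, hn, he⟩, q⟩, hb⟩ := C
    obtain ⟨⟨⟨n', hn', he'⟩, q'⟩, hb'⟩ := C'
    dsimp at h1
    subst h1
    have h2 : q = q' := by
      have h3 := (Sigma.mk.inj_iff.mp hCC).2
      have h4 := eq_of_heq h3
      exact congrArg Subtype.val h4
    subst h2
    rfl
  have hle := Nat.card_le_card_of_injective F hinj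
  rw [nat_card_sigma] at hle
  rwa [Fin.sum_univ_eq_sum_range (fun n => Nat.card (BadCE A n ε cbar)) (N + 1)] at hle

lemma geodClass_le_piA (A k : ℕ) : Nat.card (GeodClass A (2 * k)) ≤ piA A (2 * k) := by
  apply Nat.card_le_card_of_injective
    (fun q => (⟨⟨2 * k, le_rfl, even_two_mul k⟩, q⟩ : Geod A (2 * k)))
  intro q q' hqq
  exact eq_of_heq (Sigma.mk.inj_iff.mp hqq).2

lemma piA_lower (A k : ℕ) (hA : 2 ≤ A) (hk : 0 < k) :
    A ^ (2 * k) ≤ piA A (2 * k) * k + A ^ (k + 1) := by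
  have h1 := word_card_split A (2 * k)
  have h2 := prim_le_classes A k hk
  have h3 := nonprim_card_le A k hk
  have h4 := nat_card_sigma_words A k
  have h5 := geom_le hA (k + 1)
  have h6 := geodClass_le_piA A k
  have h7 := card_word A (2 * k)
  have h8 : Nat.card {w : Word A (2 * k) // ¬ Primitive w} ≤ A ^ (k + 1) := by
    calc Nat.card {w : Word A (2 * k) // ¬ Primitive w}
        ≤ Nat.card (Σ d : Fin (k + 1), Word A d.1) := h3
      _ = ∑ d ∈ Finset.range (k + 1), A ^ d := h4
      _ ≤ A ^ (k + 1) := h5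
  calc A ^ (2 * k) = Nat.card (Word A (2 * k)) := h7.symm
    _ ≤ Nat.card (PrimWord A (2 * k)) + Nat.card {w : Word A (2 * k) // ¬ Primitive w} := h1
    _ ≤ Nat.card (GeodClass A (2 * k)) * k + A ^ (k + 1) := Nat.add_le_add h2 h8
    _ ≤ piA A (2 * k) * k + A ^ (k + 1) := Nat.add_le_add_right (Nat.mul_le_mul_right _ h6) _

lemma geom_sum_inv_le {a : ℝ} (ha : 2 ≤ a) (m : ℕ) :
    ∑ i ∈ Finset.range m, (a⁻¹) ^ i ≤ 2 := by
  have ha0 : (0 : ℝ) < a := by linarith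
  have hr0 : (0 : ℝ) ≤ a⁻¹ := by positivity
  have hr : a⁻¹ ≤ 1 / 2 := by
    rw [inv_eq_one_div]
    apply div_le_div_of_nonneg_left (by norm_num) (by norm_num) ha
  induction m with
  | zero => simp
  | succ m ih =>
    rw [geom_sum_succ]
    have hS0 : (0 : ℝ) ≤ ∑ i ∈ Finset.range m, (a⁻¹) ^ i :=
      Finset.sum_nonneg fun i _ => pow_nonneg hr0 i
    nlinarith

end Assembly
set_option maxHeartbeats 1000000 in
-- STATEMENT 19
theorem stmt19 (A : ℕ) (hA : 1 < A) (c : ℝ)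
    (h : ∀ ε : ℝ, 0 < ε →
      Tendsto
        (fun N : ℕ =>
          (Nat.card {α : Word A N //
              ε < |2 / (N : ℝ) * ∑ j : Fin N, Real.log (Tpow α (j.1 + 1)) - c|} : ℝ) /
            (A : ℝ) ^ N)
        atTop (nhds 0)) :
    ∀ ε : ℝ, 0 < ε →
      Tendsto
        (fun k : ℕ =>
          (Nat.card {C : Geod A (2 * k) //
              ε < |glenG C / (plenG C : ℝ) - c|} : ℝ) /
            (piA A (2 * k) : ℝ))
        atTop (nhds 0) := by
  intro ε hε
  have hA2 : (2 : ℝ) ≤ (A : ℝ) := by exact_mod_cast (by omega : 2 ≤ A)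
  have ha1 : (1 : ℝ) < (A : ℝ) := by linarith
  have ha0 : (0 : ℝ) < (A : ℝ) := by linarith
  rw [Metric.tendsto_atTop]
  intro δ hδ
  obtain ⟨K₁, hK₁⟩ := Metric.tendsto_atTop.mp (h ε hε) (δ / 32) (by positivity)
  have hpoly : Tendsto (fun k : ℕ => ((k : ℝ) ^ 2 / (A : ℝ) ^ k)) atTop (nhds 0) :=
    tendsto_pow_const_div_const_pow_of_one_lt 2 ha1
  obtain ⟨K₂, hK₂⟩ := Metric.tendsto_atTop.mp hpoly (δ / 16) (by positivity)
  refine ⟨max (max K₁ K₂) 2, fun k hk => ?_⟩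
  have hk2 : 2 ≤ k := le_trans (le_max_right _ _) hk
  have hk1 : 1 ≤ k := by omega
  have hkK₁ : K₁ ≤ k := le_trans (le_max_left _ _) (le_trans (le_max_left _ _) hk)
  have hkK₂ : K₂ ≤ k := le_trans (le_max_right _ _) (le_trans (le_max_left _ _) hk)
  set Bad : ℝ := (Nat.card {C : Geod A (2 * k) // ε < |glenG C / (plenG C : ℝ) - c|} : ℝ)
    with hBaddef
  set pa : ℝ := (piA A (2 * k) : ℝ) with hpadef
  -- lower bound for pa
  have hπ1 : (A : ℝ) ^ (2 * k) ≤ pa * k + (A : ℝ) ^ (k + 1) := by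
    have h0 := piA_lower A k (by omega) (by omega)
    have hcast : ((A ^ (2 * k) : ℕ) : ℝ) ≤ ((piA A (2 * k) * k + A ^ (k + 1) : ℕ) : ℝ) := by
      exact_mod_cast h0
    push_cast at hcast
    exact hcast
  have hgeo : 2 * (A : ℝ) ^ (k + 1) ≤ (A : ℝ) ^ (2 * k) := by
    have h1 : (A : ℝ) ^ (2 * k) = (A : ℝ) ^ (k + 1) * (A : ℝ) ^ (k - 1) := by
      rw [← pow_add]; congr 1; omega
    have h2 : (2 : ℝ) ≤ (A : ℝ) ^ (k - 1) := by
      calc (2 : ℝ) ≤ (A : ℝ) := hA2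
        _ = (A : ℝ) ^ 1 := (pow_one (A : ℝ)).symm
        _ ≤ (A : ℝ) ^ (k - 1) := pow_le_pow_right₀ (le_of_lt ha1) (by omega)
    nlinarith [pow_pos ha0 (k + 1)]
  have hpa0 : (0 : ℝ) ≤ pa := Nat.cast_nonneg _
  have hπ2 : (A : ℝ) ^ (2 * k) / (2 * k) ≤ pa := by
    rw [div_le_iff₀ (by positivity : (0 : ℝ) < 2 * (k : ℝ))]
    nlinarith
  have hπpos : (0 : ℝ) < pa := by
    have := pow_pos ha0 (2 * k)
    have h2k : (0 : ℝ) < 2 * (k : ℝ) := by positivity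
    nlinarith [div_pos this h2k]
  -- numerator bound
  have hnum : Bad ≤ ∑ n ∈ Finset.range (2 * k + 1), (Nat.card (BadCE A n ε c) : ℝ) := by
    have h0 := badGeod_le A (2 * k) ε c
    rw [hBaddef]
    exact_mod_cast h0
  -- per-level facts
  have hw0 : ∀ m : ℕ, (0 : ℝ) ≤ (Nat.card (BadCE A m ε c) : ℝ) := fun m => Nat.cast_nonneg _
  have hwmul : ∀ n, Even n → 0 < n → (Nat.card (BadCE A n ε c) : ℝ) * n ≤ 2 * (Nat.card (BadW A n ε c) : ℝ) := by
    intro n he hn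
    exact_mod_cast badCE_mul_le (A := A) (ε := ε) (cbar := c) he hn
  have hBn : ∀ n, K₁ ≤ n → (Nat.card (BadW A n ε c) : ℝ) ≤ δ / 32 * (A : ℝ) ^ n := by
    intro n hn
    have h1 : dist ((Nat.card (BadW A n ε c) : ℝ) / (A : ℝ) ^ n) 0 < δ / 32 := hK₁ n hn
    rw [Real.dist_eq, sub_zero] at h1
    have h2 : (0 : ℝ) ≤ (Nat.card (BadW A n ε c) : ℝ) / (A : ℝ) ^ n := by positivity
    rw [abs_of_nonneg h2] at h1
    have h3 : (0 : ℝ) < (A : ℝ) ^ n := pow_pos ha0 n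
    rw [div_lt_iff₀ h3] at h1
    linarith
  have hBpow : ∀ n, (Nat.card (BadW A n ε c) : ℝ) ≤ (A : ℝ) ^ n := by
    intro n
    have := badW_le_pow A n ε c
    exact_mod_cast this
  set φ : ℝ := 2 * k / (A : ℝ) ^ (2 * k) with hφdef
  have hφ0 : (0 : ℝ) ≤ φ := by positivity
  -- S1
  have hS1 : ∑ n ∈ Finset.Ico 0 (k + 1), (Nat.card (BadCE A n ε c) : ℝ) * φ ≤ ((k : ℝ) + 1) * (4 * k * ((A : ℝ)⁻¹) ^ k) := by
    have hterm : ∀ n ∈ Finset.Ico 0 (k + 1), (Nat.card (BadCE A n ε c) : ℝ) * φ ≤ 4 * k * ((A : ℝ)⁻¹) ^ k := by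
      intro n hn
      have hnk : n ≤ k := by have := (Finset.mem_Ico.mp hn).2; omega
      by_cases hcase : Even n ∧ 0 < n
      · have h1 := hwmul n hcase.1 hcase.2
        have h2 := hBpow n
        have hn1 : (1 : ℝ) ≤ (n : ℝ) := by exact_mod_cast hcase.2
        have hwle : (Nat.card (BadCE A n ε c) : ℝ) ≤ 2 * (A : ℝ) ^ n := by nlinarith [hw0 n, pow_pos ha0 n]
        have hpowle : (A : ℝ) ^ n ≤ (A : ℝ) ^ k := pow_le_pow_right₀ (le_of_lt ha1) hnk
        have hid : 2 * (A : ℝ) ^ k * φ = 4 * k * ((A : ℝ)⁻¹) ^ k := by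
          have h2k : (A : ℝ) ^ (2 * k) = (A : ℝ) ^ k * (A : ℝ) ^ k := by rw [← pow_add]; congr 1; omega
          have hak : (0 : ℝ) < (A : ℝ) ^ k := pow_pos ha0 k
          rw [hφdef, h2k, inv_pow]
          field_simp
          ring
        calc (Nat.card (BadCE A n ε c) : ℝ) * φ ≤ (2 * (A : ℝ) ^ n) * φ := mul_le_mul_of_nonneg_right hwle hφ0
          _ ≤ (2 * (A : ℝ) ^ k) * φ := by nlinarith
          _ = 4 * k * ((A : ℝ)⁻¹) ^ k := hid
      · have h0 : Nat.card (BadCE A n ε c) = 0 := badCE_zero hcase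
        have : (Nat.card (BadCE A n ε c) : ℝ) = 0 := by simp [h0]
        rw [this, zero_mul]
        positivity
    calc ∑ n ∈ Finset.Ico 0 (k + 1), (Nat.card (BadCE A n ε c) : ℝ) * φ
        ≤ ∑ _n ∈ Finset.Ico 0 (k + 1), 4 * (k : ℝ) * ((A : ℝ)⁻¹) ^ k := Finset.sum_le_sum hterm
      _ = ((k : ℝ) + 1) * (4 * k * ((A : ℝ)⁻¹) ^ k) := by
          rw [Finset.sum_const, Nat.card_Ico]
          simp [nsmul_eq_mul]
  -- S2
  have hgeosum : ∑ n ∈ Finset.Ico (k + 1) (2 * k + 1), ((A : ℝ)⁻¹) ^ (2 * k - n) ≤ 2 := by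
    rw [Finset.sum_Ico_eq_sum_range]
    have hcard : 2 * k + 1 - (k + 1) = k := by omega
    rw [hcard]
    have hcg : ∀ i ∈ Finset.range k, ((A : ℝ)⁻¹) ^ (2 * k - (k + 1 + i)) = ((A : ℝ)⁻¹) ^ (k - 1 - i) := by
      intro i hi
      congr 1
      omega
    rw [Finset.sum_congr rfl hcg, Finset.sum_range_reflect (fun i => ((A : ℝ)⁻¹) ^ i) k]
    exact geom_sum_inv_le hA2 k
  have hS2 : ∑ n ∈ Finset.Ico (k + 1) (2 * k + 1), (Nat.card (BadCE A n ε c) : ℝ) * φ ≤ δ / 4 := by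
    have hterm : ∀ n ∈ Finset.Ico (k + 1) (2 * k + 1),
        (Nat.card (BadCE A n ε c) : ℝ) * φ ≤ (δ / 8) * ((A : ℝ)⁻¹) ^ (2 * k - n) := by
      intro n hn
      obtain ⟨hn1, hn2⟩ := Finset.mem_Ico.mp hn
      by_cases hcase : Even n ∧ 0 < n
      · have h1 := hwmul n hcase.1 hcase.2
        have h2 := hBn n (by omega)
        have hkn : (k : ℝ) ≤ (n : ℝ) := by exact_mod_cast (by omega : k ≤ n)
        have hfrac : (A : ℝ) ^ n / (A : ℝ) ^ (2 * k) = ((A : ℝ)⁻¹) ^ (2 * k - n) := by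
          have hsplit2 : (A : ℝ) ^ (2 * k) = (A : ℝ) ^ n * (A : ℝ) ^ (2 * k - n) := by
            rw [← pow_add]; congr 1; omega
          have hpn : (0 : ℝ) < (A : ℝ) ^ n := pow_pos ha0 n
          have hpm : (0 : ℝ) < (A : ℝ) ^ (2 * k - n) := pow_pos ha0 _
          rw [hsplit2, inv_pow]
          field_simp
        have hwk : (Nat.card (BadCE A n ε c) : ℝ) * (2 * (k : ℝ)) ≤ 4 * (Nat.card (BadW A n ε c) : ℝ) := by
          nlinarith [mul_le_mul_of_nonneg_left hkn (hw0 n)]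
        have hp2k : (0 : ℝ) < (A : ℝ) ^ (2 * k) := pow_pos ha0 _
        have hstep : (Nat.card (BadCE A n ε c) : ℝ) * φ = ((Nat.card (BadCE A n ε c) : ℝ) * (2 * (k : ℝ))) / (A : ℝ) ^ (2 * k) := by
          rw [hφdef]; ring
        rw [hstep]
        calc ((Nat.card (BadCE A n ε c) : ℝ) * (2 * (k : ℝ))) / (A : ℝ) ^ (2 * k)
            ≤ (4 * (Nat.card (BadW A n ε c) : ℝ)) / (A : ℝ) ^ (2 * k) :=
              (div_le_div_iff_of_pos_right hp2k).mpr hwk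
          _ ≤ (4 * (δ / 32 * (A : ℝ) ^ n)) / (A : ℝ) ^ (2 * k) := by
              apply (div_le_div_iff_of_pos_right hp2k).mpr
              nlinarith
          _ = (δ / 8) * ((A : ℝ) ^ n / (A : ℝ) ^ (2 * k)) := by ring
          _ = (δ / 8) * ((A : ℝ)⁻¹) ^ (2 * k - n) := by rw [hfrac]
      · have h0 : Nat.card (BadCE A n ε c) = 0 := badCE_zero hcase
        have : (Nat.card (BadCE A n ε c) : ℝ) = 0 := by simp [h0]
        rw [this, zero_mul]
        positivity
    calc ∑ n ∈ Finset.Ico (k + 1) (2 * k + 1), (Nat.card (BadCE A n ε c) : ℝ) * φ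
        ≤ ∑ n ∈ Finset.Ico (k + 1) (2 * k + 1), (δ / 8) * ((A : ℝ)⁻¹) ^ (2 * k - n) :=
          Finset.sum_le_sum hterm
      _ = (δ / 8) * ∑ n ∈ Finset.Ico (k + 1) (2 * k + 1), ((A : ℝ)⁻¹) ^ (2 * k - n) := by
          rw [Finset.mul_sum]
      _ ≤ (δ / 8) * 2 := by
          apply mul_le_mul_of_nonneg_left hgeosum (by positivity)
      _ = δ / 4 := by ring
  -- S1 numeric bound
  have hS1' : ((k : ℝ) + 1) * (4 * k * ((A : ℝ)⁻¹) ^ k) < δ / 2 := by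
    have hkpos : (0 : ℝ) < (k : ℝ) := by exact_mod_cast hk1
    have hK2v : dist (((k : ℝ) ^ 2 / (A : ℝ) ^ k)) 0 < δ / 16 := hK₂ k hkK₂
    rw [Real.dist_eq, sub_zero] at hK2v
    have hpk : (0 : ℝ) < (A : ℝ) ^ k := pow_pos ha0 k
    have hnn : (0 : ℝ) ≤ (k : ℝ) ^ 2 / (A : ℝ) ^ k := by positivity
    rw [abs_of_nonneg hnn] at hK2v
    have hinv : ((A : ℝ)⁻¹) ^ k = ((A : ℝ) ^ k)⁻¹ := inv_pow (A : ℝ) k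
    have hk1' : (1 : ℝ) ≤ (k : ℝ) := by exact_mod_cast hk1
    have hkk : ((k : ℝ) + 1) * (4 * k) ≤ 8 * k ^ 2 := by nlinarith [hk1', hkpos]
    have h8 : 8 * ((k : ℝ) ^ 2 / (A : ℝ) ^ k) < 8 * (δ / 16) := by linarith
    calc ((k : ℝ) + 1) * (4 * k * ((A : ℝ)⁻¹) ^ k) = (((k : ℝ) + 1) * (4 * k)) * ((A : ℝ) ^ k)⁻¹ := by
          rw [hinv]; ring
      _ ≤ (8 * (k : ℝ) ^ 2) * ((A : ℝ) ^ k)⁻¹ := by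
          apply mul_le_mul_of_nonneg_right hkk (by positivity)
      _ = 8 * ((k : ℝ) ^ 2 / (A : ℝ) ^ k) := by rw [div_eq_mul_inv]; ring
      _ < 8 * (δ / 16) := h8
      _ = δ / 2 := by ring
  -- final chain
  have hp2k : (0 : ℝ) < (A : ℝ) ^ (2 * k) := pow_pos ha0 _
  have hBad0 : (0 : ℝ) ≤ Bad := Nat.cast_nonneg _
  have hquo : (0 : ℝ) < (A : ℝ) ^ (2 * k) / (2 * k) := by positivity
  have hchain : Bad / pa ≤ ∑ n ∈ Finset.range (2 * k + 1), (Nat.card (BadCE A n ε c) : ℝ) * φ := by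
    calc Bad / pa ≤ Bad / ((A : ℝ) ^ (2 * k) / (2 * k)) :=
          div_le_div_of_nonneg_left hBad0 hquo hπ2
      _ = Bad * (2 * k) / (A : ℝ) ^ (2 * k) := by
          rw [div_div_eq_mul_div]
      _ ≤ (∑ n ∈ Finset.range (2 * k + 1), (Nat.card (BadCE A n ε c) : ℝ)) * (2 * k) / (A : ℝ) ^ (2 * k) := by
          apply (div_le_div_iff_of_pos_right hp2k).mpr
          have hkk0 : (0 : ℝ) ≤ 2 * (k : ℝ) := by positivity
          exact mul_le_mul_of_nonneg_right hnum hkk0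
      _ = (∑ n ∈ Finset.range (2 * k + 1), (Nat.card (BadCE A n ε c) : ℝ)) * φ := by
          rw [hφdef]; ring
      _ = ∑ n ∈ Finset.range (2 * k + 1), (Nat.card (BadCE A n ε c) : ℝ) * φ := Finset.sum_mul _ _ _
  have hsplitsum : ∑ n ∈ Finset.range (2 * k + 1), (Nat.card (BadCE A n ε c) : ℝ) * φ
      = ∑ n ∈ Finset.Ico 0 (k + 1), (Nat.card (BadCE A n ε c) : ℝ) * φ
        + ∑ n ∈ Finset.Ico (k + 1) (2 * k + 1), (Nat.card (BadCE A n ε c) : ℝ) * φ := by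
    rw [Finset.range_eq_Ico]
    exact (Finset.sum_Ico_consecutive _ (Nat.zero_le (k + 1)) (by omega)).symm
  have hfin : Bad / pa < δ := by
    have := hchain
    rw [hsplitsum] at this
    have : Bad / pa ≤ (((k : ℝ) + 1) * (4 * k * ((A : ℝ)⁻¹) ^ k)) + δ / 4 := by linarith
    linarith
  rw [Real.dist_eq, sub_zero]
  have hG0 : (0 : ℝ) ≤ Bad / pa := div_nonneg hBad0 (le_of_lt hπpos)
  rw [abs_of_nonneg hG0]
  exact hfin
end Winding
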